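/- Let r, g closed convex proper, f convex differentiable with L-Lipschitz gradient, 0 < α < 3/(2L), and suppose the PPG residual operator p has a zero. Then the iterates z^{k+1} = z^k − αp(z^k) converge to some z^∞ with p(z^∞) = 0, and x^{k+1/2} = prox_{αr}(z^k) converges to x* = prox_{αr}(z^∞). -/

import Mathlib

open Set Filter Topology
open scoped RealInnerProductSpace

noncomputable section

/-- `f` is closed (lower semicontinuous), convex, and proper
as an extended-real-valued function. -/
def ClosedConvexProper {E : Type*} [NormedAddCommGroup E] [NormedSpace ℝ E]
    (f : E → EReal) : Prop :=
  LowerSemicontinuous f ∧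
  (∀ (a b : ℝ) (x y : E), 0 ≤ a → 0 ≤ b → a + b = 1 →
    f (a • x + b • y) ≤ (a : EReal) * f x + (b : EReal) * f y) ∧
  (∀ x, f x ≠ ⊥) ∧ (∃ x, f x ≠ ⊤)

/-- `p` is a minimizer of the prox objective of the extended-real-valued `f` at `x₀`. -/
def IsProxPt {E : Type*} [NormedAddCommGroup E] [InnerProductSpace ℝ E]
    (f : E → EReal) (x₀ p : E) : Prop :=
  IsMinOn (fun x => f x + ((1 / 2 * ‖x - x₀‖ ^ 2 : ℝ) : EReal)) Set.univ p

/-- `p` is a minimizer of the prox objective of the real-valued `f` at `x₀`. -/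
def IsProxPtR {E : Type*} [NormedAddCommGroup E] [InnerProductSpace ℝ E]
    (f : E → ℝ) (x₀ p : E) : Prop :=
  IsMinOn (fun x => f x + 1 / 2 * ‖x - x₀‖ ^ 2) Set.univ p


-- EReal helpers
lemma ereal_coe_mul_ne_bot {α : ℝ} (hα : 0 < α) {A : EReal} (hA : A ≠ ⊥) :
    (α : EReal) * A ≠ ⊥ := by
  induction A using EReal.rec with
  | bot => exact absurd rfl hA
  | coe c => rw [← EReal.coe_mul]; exact EReal.coe_ne_bot _
  | top => rw [EReal.coe_mul_top_of_pos (by exact_mod_cast hα)]; exact top_ne_bot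

lemma ereal_coe_mul_ne_top {α : ℝ} {A : EReal} (hbot : A ≠ ⊥) (htop : A ≠ ⊤) :
    (α : EReal) * A ≠ ⊤ := by
  induction A using EReal.rec with
  | bot => exact absurd rfl hbot
  | coe c => rw [← EReal.coe_mul]; exact EReal.coe_ne_top _
  | top => exact absurd rfl htop

lemma ereal_mul_eq_coe {α : ℝ} (hα : 0 < α) {A : EReal} {c : ℝ}
    (h : (α : EReal) * A = (c : EReal)) : A = ((c / α : ℝ) : EReal) := by
  induction A using EReal.rec with
  | bot =>
    rw [EReal.coe_mul_bot_of_pos (by exact_mod_cast hα)] at h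
    exact absurd h (EReal.bot_ne_coe _)
  | coe a =>
    rw [← EReal.coe_mul] at h
    have := EReal.coe_eq_coe_iff.mp h
    rw [EReal.coe_eq_coe_iff]
    field_simp
    linarith [this]
  | top =>
    rw [EReal.coe_mul_top_of_pos (by exact_mod_cast hα)] at h
    exact absurd h.symm (EReal.coe_ne_top _)

section ProxVal
variable {E : Type*} [NormedAddCommGroup E] [InnerProductSpace ℝ E]

lemma prox_val_real {h : E → EReal} (hbot : ∀ x, h x ≠ ⊥) {x0 : E} (hx0 : h x0 ≠ ⊤)
    {w p : E} (hp : IsProxPt h w p) : ∃ c : ℝ, h p = (c : EReal) := by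
  have hmin := isMinOn_iff.mp hp x0 (mem_univ _)
  have htop : h p ≠ ⊤ := by
    intro hcon
    rw [hcon] at hmin
    have h1 : h x0 + ((1 / 2 * ‖x0 - w‖ ^ 2 : ℝ) : EReal) < ⊤ :=
      EReal.add_lt_top hx0 (EReal.coe_ne_top _)
    have h2 : (⊤ : EReal) + ((1 / 2 * ‖p - w‖ ^ 2 : ℝ) : EReal) = ⊤ :=
      EReal.top_add_coe _
    rw [h2] at hmin
    exact absurd (lt_of_le_of_lt hmin h1) (lt_irrefl _)
  exact ⟨(h p).toReal, (EReal.coe_toReal htop (hbot p)).symm⟩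

end ProxVal

section Aux
variable {E : Type*} [NormedAddCommGroup E] [InnerProductSpace ℝ E]

lemma sq_le_inner_to_norm {a b : E} (h : ‖a‖ ^ 2 ≤ ⟪b, a⟫) : ‖a‖ ≤ ‖b‖ := by
  rcases eq_or_ne a 0 with rfl | ha
  · simp
  · have h1 : ⟪b, a⟫ ≤ ‖b‖ * ‖a‖ := real_inner_le_norm b a
    have h2 : 0 < ‖a‖ := norm_pos_iff.mpr ha
    nlinarith

lemma prox_subgrad {h : E → EReal}
    (hconv : ∀ (a b : ℝ) (x y : E), 0 ≤ a → 0 ≤ b → a + b = 1 →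
      ∀ (cx cy : ℝ), h x = (cx : EReal) → h y = (cy : EReal) →
        h (a • x + b • y) ≤ ((a * cx + b * cy : ℝ) : EReal))
    {u p : E} (hp : IsProxPt h u p) {q : E} {cp cq : ℝ}
    (hcp : h p = (cp : EReal)) (hcq : h q = (cq : EReal)) :
    cp ≤ cq + ⟪p - u, q - p⟫ := by
  have key : ∀ t ∈ Ioc (0:ℝ) 1, cp ≤ cq + ⟪p - u, q - p⟫ + t / 2 * ‖q - p‖ ^ 2 := by
    intro t ht
    set pt : E := (1 - t) • p + t • q with hpt
    have hmin := isMinOn_iff.mp hp pt (mem_univ _)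
    have hcv := hconv (1 - t) t p q (by linarith [ht.2]) (le_of_lt ht.1) (by ring) cp cq hcp hcq
    have hchain : ((cp + 1 / 2 * ‖p - u‖ ^ 2 : ℝ) : EReal) ≤
        (((1 - t) * cp + t * cq + 1 / 2 * ‖pt - u‖ ^ 2 : ℝ) : EReal) := by
      calc ((cp + 1 / 2 * ‖p - u‖ ^ 2 : ℝ) : EReal)
          = h p + ((1 / 2 * ‖p - u‖ ^ 2 : ℝ) : EReal) := by rw [hcp, ← EReal.coe_add]
        _ ≤ h pt + ((1 / 2 * ‖pt - u‖ ^ 2 : ℝ) : EReal) := hmin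
        _ ≤ (((1 - t) * cp + t * cq : ℝ) : EReal) + ((1 / 2 * ‖pt - u‖ ^ 2 : ℝ) : EReal) := by
            exact add_le_add hcv le_rfl
        _ = (((1 - t) * cp + t * cq + 1 / 2 * ‖pt - u‖ ^ 2 : ℝ) : EReal) := by
            rw [← EReal.coe_add]
    have hre : cp + 1 / 2 * ‖p - u‖ ^ 2 ≤
        (1 - t) * cp + t * cq + 1 / 2 * ‖pt - u‖ ^ 2 := EReal.coe_le_coe_iff.mp hchain
    have hptu : pt - u = (p - u) + t • (q - p) := by
      rw [hpt]; module
    have hnorm : ‖pt - u‖ ^ 2 =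
        ‖p - u‖ ^ 2 + 2 * (t * ⟪p - u, q - p⟫) + t ^ 2 * ‖q - p‖ ^ 2 := by
      rw [hptu, norm_add_sq_real, real_inner_smul_right, norm_smul, Real.norm_eq_abs,
        abs_of_pos ht.1, mul_pow]
    rw [hnorm] at hre
    have ht' : t * cp ≤ t * (cq + ⟪p - u, q - p⟫ + t / 2 * ‖q - p‖ ^ 2) := by nlinarith
    exact le_of_mul_le_mul_left ht' ht.1
  have htend : Tendsto (fun t : ℝ => cq + ⟪p - u, q - p⟫ + t / 2 * ‖q - p‖ ^ 2)
      (𝓝[>] (0:ℝ)) (𝓝 (cq + ⟪p - u, q - p⟫)) := by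
    have : Continuous (fun t : ℝ => cq + ⟪p - u, q - p⟫ + t / 2 * ‖q - p‖ ^ 2) := by
      continuity
    have h0 := this.continuousAt (x := (0:ℝ))
    have h1 : Tendsto (fun t : ℝ => cq + ⟪p - u, q - p⟫ + t / 2 * ‖q - p‖ ^ 2)
        (𝓝[>] (0:ℝ)) (𝓝 (cq + ⟪p - u, q - p⟫ + 0 / 2 * ‖q - p‖ ^ 2)) :=
      h0.tendsto.mono_left (nhdsWithin_le_nhds (s := Ioi 0))
    simpa using h1
  refine ge_of_tendsto htend ?_
  filter_upwards [Ioc_mem_nhdsGT_of_mem (Set.left_mem_Ico.mpr one_pos)] with t ht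
  exact key t ht


lemma prox_firm {h : E → EReal}
    (hconv : ∀ (a b : ℝ) (x y : E), 0 ≤ a → 0 ≤ b → a + b = 1 →
      ∀ (cx cy : ℝ), h x = (cx : EReal) → h y = (cy : EReal) →
        h (a • x + b • y) ≤ ((a * cx + b * cy : ℝ) : EReal))
    (hbot : ∀ x, h x ≠ ⊥) {x0 : E} (hx0 : h x0 ≠ ⊤)
    {Pf : E → E} (hPf : ∀ w, IsProxPt h w (Pf w)) (u v : E) :
    ‖Pf u - Pf v‖ ^ 2 ≤ ⟪u - v, Pf u - Pf v⟫ := by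
  obtain ⟨cu, hcu⟩ := prox_val_real hbot hx0 (hPf u)
  obtain ⟨cv, hcv⟩ := prox_val_real hbot hx0 (hPf v)
  have h1 : cu ≤ cv + ⟪Pf u - u, Pf v - Pf u⟫ := prox_subgrad hconv (hPf u) hcu hcv
  have h2 : cv ≤ cu + ⟪Pf v - v, Pf u - Pf v⟫ := prox_subgrad hconv (hPf v) hcv hcu
  set pu := Pf u; set pv := Pf v
  have e1 : ⟪pu - u, pv - pu⟫ = -⟪pu, pu - pv⟫ + ⟪u, pu - pv⟫ := by
    simp only [inner_sub_left, inner_sub_right]; ring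
  have e2 : ⟪pv - v, pu - pv⟫ = ⟪pv, pu - pv⟫ - ⟪v, pu - pv⟫ := by
    simp only [inner_sub_left]
  have e3 : ⟪u - v, pu - pv⟫ = ⟪u, pu - pv⟫ - ⟪v, pu - pv⟫ := by
    simp only [inner_sub_left]
  have e4 : ‖pu - pv‖ ^ 2 = ⟪pu, pu - pv⟫ - ⟪pv, pu - pv⟫ := by
    rw [← real_inner_self_eq_norm_sq, inner_sub_left]
  linarith

end Aux

section Grad
variable {E : Type*} [NormedAddCommGroup E] [InnerProductSpace ℝ E] [CompleteSpace E]

lemma line_hasDerivAt {f : E → ℝ} {f' : E → E} (hf' : ∀ x, HasGradientAt f (f' x) x)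
    (x v : E) (t : ℝ) :
    HasDerivAt (fun s : ℝ => f (x + s • v)) ⟪f' (x + t • v), v⟫ t := by
  have hline : HasDerivAt (fun s : ℝ => x + s • v) v t := by
    simpa using ((hasDerivAt_id t).smul_const v).const_add x
  have hg := (hf' (x + t • v)).hasFDerivAt
  have := hg.comp_hasDerivAt t hline
  simpa [InnerProductSpace.toDual_apply_apply, Function.comp_def] using this

lemma grad_ineq {f : E → ℝ} (hfconv : ConvexOn ℝ Set.univ f)
    {f' : E → E} (hf' : ∀ x, HasGradientAt f (f' x) x) (x y : E) :
    f x + ⟪f' x, y - x⟫ ≤ f y := by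
  set v : E := y - x with hv
  set g : ℝ → ℝ := fun s => f (x + s • v) with hg
  have hgc : ConvexOn ℝ Set.univ g := by
    have := hfconv.comp_affineMap (AffineMap.lineMap x y)
    have heq : (f ∘ (AffineMap.lineMap x y)) = g := by
      funext s
      simp [g, AffineMap.lineMap_apply_module, v]
      ring_nf
      congr 1
      module
    rw [heq] at this
    simpa using this
  have hd0 : HasDerivAt g ⟪f' x, v⟫ 0 := by
    have := line_hasDerivAt hf' x v 0
    simpa using this
  have hsl : ∀ t ∈ Ioo (0:ℝ) 1, slope g 0 t ≤ slope g 0 1 := by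
    intro t ht
    have := hgc.secant_mono (mem_univ (0:ℝ)) (mem_univ t) (mem_univ (1:ℝ))
      (ne_of_gt ht.1) one_ne_zero (le_of_lt ht.2)
    simpa [slope_def_field] using this
  have htendsl : Tendsto (slope g 0) (𝓝[>] (0:ℝ)) (𝓝 ⟪f' x, v⟫) :=
    ((hasDerivAt_iff_tendsto_slope.mp hd0).mono_left
      (nhdsWithin_mono _ (by intro a ha; exact ne_of_gt ha)))
  have hle : ⟪f' x, v⟫ ≤ slope g 0 1 := by
    refine le_of_tendsto htendsl ?_
    filter_upwards [Ioo_mem_nhdsGT_of_mem (Set.left_mem_Ico.mpr one_pos)] with t ht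
    exact hsl t ht
  have hg1 : g 1 = f y := by simp [g, v]
  have hg0 : g 0 = f x := by simp [g]
  rw [slope_def_field] at hle
  rw [hg1, hg0] at hle
  have : ⟪f' x, v⟫ ≤ (f y - f x) / (1 - 0) := hle
  simp at this
  linarith

lemma descent_lemma {f : E → ℝ} {f' : E → E} (hf' : ∀ x, HasGradientAt f (f' x) x)
    {L : ℝ} (hL : 0 < L) (hLip : ∀ x y, ‖f' x - f' y‖ ≤ L * ‖x - y‖) (x y : E) :
    f y ≤ f x + ⟪f' x, y - x⟫ + L / 2 * ‖y - x‖ ^ 2 := by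
  set v : E := y - x with hv
  set h : ℝ → ℝ := fun t => f (x + t • v) - t * ⟪f' x, v⟫ - L * t ^ 2 / 2 * ‖v‖ ^ 2 with hh
  have hd : ∀ t : ℝ, HasDerivAt h
      (⟪f' (x + t • v), v⟫ - ⟪f' x, v⟫ - L * t * ‖v‖ ^ 2) t := by
    intro t
    have h1 := line_hasDerivAt hf' x v t
    have h2 : HasDerivAt (fun t : ℝ => t * ⟪f' x, v⟫) ⟪f' x, v⟫ t := by
      simpa using (hasDerivAt_id t).mul_const ⟪f' x, v⟫
    have h3 : HasDerivAt (fun t : ℝ => L * t ^ 2 / 2 * ‖v‖ ^ 2) (L * t * ‖v‖ ^ 2) t := by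
      have : HasDerivAt (fun t : ℝ => t ^ 2) (2 * t) t := by
        simpa using hasDerivAt_pow 2 t
      have := ((this.const_mul L).div_const 2).mul_const (‖v‖ ^ 2)
      refine this.congr_deriv ?_
      ring
    exact (h1.sub h2).sub h3
  have hderiv_nonpos : ∀ t ∈ interior (Icc (0:ℝ) 1), deriv h t ≤ 0 := by
    intro t ht
    rw [interior_Icc] at ht
    rw [(hd t).deriv]
    have hcs : ⟪f' (x + t • v) - f' x, v⟫ ≤ ‖f' (x + t • v) - f' x‖ * ‖v‖ :=
      real_inner_le_norm _ _
    have hlip2 : ‖f' (x + t • v) - f' x‖ ≤ L * (t * ‖v‖) := by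
      have := hLip (x + t • v) x
      simpa [norm_smul, abs_of_pos ht.1] using this
    have hinner : ⟪f' (x + t • v), v⟫ - ⟪f' x, v⟫ = ⟪f' (x + t • v) - f' x, v⟫ := by
      rw [inner_sub_left]
    rw [hinner]
    nlinarith [norm_nonneg v, norm_nonneg (f' (x + t • v) - f' x)]
  have hanti : AntitoneOn h (Icc (0:ℝ) 1) := by
    refine antitoneOn_of_deriv_nonpos (convex_Icc 0 1) ?_ ?_ hderiv_nonpos
    · exact fun t _ => ((hd t).differentiableAt).continuousAt.continuousWithinAt
    · intro t _
      exact ((hd t).differentiableAt).differentiableWithinAt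
  have h10 : h 1 ≤ h 0 := hanti (by simp) (by simp) zero_le_one
  have h0 : h 0 = f x := by simp [h]
  have h1 : h 1 = f y - ⟪f' x, v⟫ - L / 2 * ‖v‖ ^ 2 := by
    simp only [h, one_smul, one_pow, one_mul]
    have : x + v = y := by simp [v]
    rw [this]
    ring
  rw [h0, h1] at h10
  linarith


lemma linear_convexOn (c : E) : ConvexOn ℝ Set.univ (fun y : E => ⟪c, y⟫) := by
  refine ⟨convex_univ, ?_⟩
  intro p _ q _ a b _ _ _
  simp only [inner_add_right, real_inner_smul_right]
  exact le_of_eq rfl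

lemma inner_hasGradientAt (c : E) (y : E) : HasGradientAt (fun w : E => ⟪c, w⟫) c y := by
  rw [hasGradientAt_iff_hasFDerivAt]
  exact (InnerProductSpace.toDual ℝ E c).hasFDerivAt

lemma cocoercive {f : E → ℝ} (hfconv : ConvexOn ℝ Set.univ f)
    {f' : E → E} (hf' : ∀ x, HasGradientAt f (f' x) x)
    {L : ℝ} (hL : 0 < L) (hLip : ∀ x y, ‖f' x - f' y‖ ≤ L * ‖x - y‖) (x y : E) :
    1 / L * ‖f' x - f' y‖ ^ 2 ≤ ⟪f' x - f' y, x - y⟫ := by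
  -- one-sided estimate
  have half : ∀ a b : E, f a + ⟪f' a, b - a⟫ + 1 / (2 * L) * ‖f' b - f' a‖ ^ 2 ≤ f b := by
    intro a b
    set φ : E → E := fun w => f' w - f' a with hφ
    have hφgrad : ∀ w, HasGradientAt (fun w => f w - ⟪f' a, w⟫) (φ w) w := by
      intro w
      rw [hasGradientAt_iff_hasFDerivAt]
      have h1 := (hf' w).hasFDerivAt
      have h2 := (inner_hasGradientAt (f' a) w)
      rw [hasGradientAt_iff_hasFDerivAt] at h2
      have := h1.sub h2
      refine this.congr_fderiv ?_
      simp [φ, map_sub]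
    have hφconv : ConvexOn ℝ Set.univ (fun w => f w - ⟪f' a, w⟫) := by
      have := hfconv.add (linear_convexOn (-(f' a)))
      simpa [inner_neg_left, sub_eq_add_neg, Pi.add_def] using this
    have hφlip : ∀ u v, ‖φ u - φ v‖ ≤ L * ‖u - v‖ := by
      intro u v
      simpa [φ, sub_sub_sub_cancel_right] using hLip u v
    -- φ has min at a since its gradient is 0 there
    have hmin : ∀ w, f a - ⟪f' a, a⟫ ≤ f w - ⟪f' a, w⟫ := by
      intro w
      have := grad_ineq hφconv hφgrad a w
      simpa [φ] using this
    -- descent step from b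
    have hstep := descent_lemma hφgrad hL hφlip b (b - (1/L) • φ b)
    have hmb := hmin (b - (1/L) • φ b)
    have hsimp : (b - (1/L) • φ b) - b = -((1/L) • φ b) := by module
    rw [hsimp] at hstep
    have hinner : ⟪φ b, -((1/L) • φ b)⟫ = -(1/L) * ‖φ b‖ ^ 2 := by
      rw [inner_neg_right, real_inner_smul_right, real_inner_self_eq_norm_sq]
      ring
    have hnorm : ‖-((1/L) • φ b)‖ ^ 2 = (1/L)^2 * ‖φ b‖ ^ 2 := by
      rw [norm_neg, norm_smul, Real.norm_eq_abs, abs_of_pos (by positivity), mul_pow]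
    rw [hinner, hnorm] at hstep
    have hLne : L ≠ 0 := ne_of_gt hL
    have key : f a - ⟪f' a, a⟫ ≤ f b - ⟪f' a, b⟫ - 1 / (2 * L) * ‖φ b‖ ^ 2 := by
      have := le_trans hmb hstep
      have e1 : f b - ⟪f' a, b⟫ + -(1 / L) * ‖φ b‖ ^ 2 + L / 2 * ((1 / L) ^ 2 * ‖φ b‖ ^ 2)
          = f b - ⟪f' a, b⟫ - 1 / (2 * L) * ‖φ b‖ ^ 2 := by
        field_simp
        ring
      rw [e1] at this
      exact this
    have e2 : ⟪f' a, b - a⟫ = ⟪f' a, b⟫ - ⟪f' a, a⟫ := by rw [inner_sub_right]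
    have e3 : ‖f' b - f' a‖ = ‖φ b‖ := rfl
    rw [e2, e3]
    linarith
  have h1 := half x y
  have h2 := half y x
  have e1 : ⟪f' x, y - x⟫ = ⟪f' x, y⟫ - ⟪f' x, x⟫ := by rw [inner_sub_right]
  have e2 : ⟪f' y, x - y⟫ = ⟪f' y, x⟫ - ⟪f' y, y⟫ := by rw [inner_sub_right]
  have e3 : ⟪f' x - f' y, x - y⟫ =
      ⟪f' x, x⟫ - ⟪f' x, y⟫ - ⟪f' y, x⟫ + ⟪f' y, y⟫ := by
    simp only [inner_sub_left, inner_sub_right]; ring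
  have e4 : ‖f' y - f' x‖ = ‖f' x - f' y‖ := norm_sub_rev _ _
  have e5 : (1:ℝ) / (2 * L) + 1 / (2 * L) = 1 / L := by rw [← add_div, div_eq_div_iff (by positivity) hL.ne']; ring
  rw [e1] at h1; rw [e2] at h2; rw [e4] at h1
  rw [e3]
  have e6 : 1 / (2 * L) * ‖f' x - f' y‖ ^ 2 + 1 / (2 * L) * ‖f' x - f' y‖ ^ 2
      = 1 / L * ‖f' x - f' y‖ ^ 2 := by rw [← add_mul, e5]
  linarith

end Grad

section Contraction
variable {E : Type*} [NormedAddCommGroup E] [InnerProductSpace ℝ E]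

lemma contraction_ineq {e s t q : E} {α L : ℝ} (hα : 0 < α) (hL : 0 < L)
    (h1 : ‖t‖ ^ 2 ≤ ⟪(2:ℝ) • s - e - α • q, t⟫)
    (h2 : ‖s‖ ^ 2 ≤ ⟪e, s⟫)
    (h3 : 1 / L * ‖q‖ ^ 2 ≤ ⟪q, s⟫) :
    ‖e + t - s‖ ^ 2 + (1 - α * L / 2) * ‖t - s‖ ^ 2 ≤ ‖e‖ ^ 2 := by
  have hsq : (0:ℝ) ≤ ‖(L / 2) • (t - s) + q‖ ^ 2 := by positivity
  have E1 : ⟪(2:ℝ) • s - e - α • q, t⟫ = 2 * ⟪t, s⟫ - ⟪e, t⟫ - α * ⟪t, q⟫ := by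
    simp only [inner_sub_left, real_inner_smul_left]
    rw [real_inner_comm s t, real_inner_comm q t]
  have E2 : ‖(L / 2) • (t - s) + q‖ ^ 2 =
      (L / 2) ^ 2 * (‖t‖ ^ 2 - 2 * ⟪t, s⟫ + ‖s‖ ^ 2)
      + 2 * ((L / 2) * (⟪t, q⟫ - ⟪s, q⟫)) + ‖q‖ ^ 2 := by
    rw [norm_add_sq_real, real_inner_smul_left, inner_sub_left, norm_smul,
      Real.norm_eq_abs, abs_of_pos (by positivity : (0:ℝ) < L / 2), mul_pow,
      norm_sub_sq_real]
  have E3 : ‖e + t - s‖ ^ 2 = ‖e‖ ^ 2 + ‖t‖ ^ 2 + ‖s‖ ^ 2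
      + 2 * ⟪e, t⟫ - 2 * ⟪e, s⟫ - 2 * ⟪t, s⟫ := by
    have he : e + t - s = e + (t - s) := by abel
    rw [he, norm_add_sq_real, norm_sub_sq_real, inner_sub_right]
    ring
  have E4 : ‖t - s‖ ^ 2 = ‖t‖ ^ 2 - 2 * ⟪t, s⟫ + ‖s‖ ^ 2 := by
    rw [norm_sub_sq_real]
  rw [E1] at h1
  rw [E2] at hsq
  rw [E3, E4]
  have h3' : ⟪q, s⟫ = ⟪s, q⟫ := real_inner_comm _ _
  rw [h3'] at h3
  have s3 : 2 * α / L * ‖q‖ ^ 2 ≤ 2 * α * ⟪s, q⟫ := by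
    have := mul_le_mul_of_nonneg_left h3 (by positivity : (0:ℝ) ≤ 2 * α)
    calc 2 * α / L * ‖q‖ ^ 2 = 2 * α * (1 / L * ‖q‖ ^ 2) := by ring
      _ ≤ 2 * α * ⟪s, q⟫ := this
  have s4 : (0:ℝ) ≤ α * L / 2 * (‖t‖ ^ 2 - 2 * ⟪t, s⟫ + ‖s‖ ^ 2)
      + 2 * α * (⟪t, q⟫ - ⟪s, q⟫) + 2 * α / L * ‖q‖ ^ 2 := by
    have h4 := mul_nonneg (by positivity : (0:ℝ) ≤ 2 * α / L) hsq
    have heq : 2 * α / L * ((L / 2) ^ 2 * (‖t‖ ^ 2 - 2 * ⟪t, s⟫ + ‖s‖ ^ 2)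
        + 2 * ((L / 2) * (⟪t, q⟫ - ⟪s, q⟫)) + ‖q‖ ^ 2)
        = α * L / 2 * (‖t‖ ^ 2 - 2 * ⟪t, s⟫ + ‖s‖ ^ 2)
        + 2 * α * (⟪t, q⟫ - ⟪s, q⟫) + 2 * α / L * ‖q‖ ^ 2 := by
      field_simp
    rw [heq] at h4
    exact h4
  linarith [h1, h2, s3, s4]

end Contraction

/-- Convergence of the PPG iterates to a zero of the residual operator. -/
theorem stmt15
    {d : ℕ} (α : ℝ) (hα : 0 < α)
    (r g : EuclideanSpace ℝ (Fin d) → EReal)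
    (hr : ClosedConvexProper r) (hg : ClosedConvexProper g)
    (f : EuclideanSpace ℝ (Fin d) → ℝ) (hfconv : ConvexOn ℝ Set.univ f)
    (f' : EuclideanSpace ℝ (Fin d) → EuclideanSpace ℝ (Fin d))
    (hf' : ∀ x, HasGradientAt f (f' x) x)
    (Pr Pg : EuclideanSpace ℝ (Fin d) → EuclideanSpace ℝ (Fin d))
    (hPr : ∀ w, IsProxPt (fun x => (α : EReal) * r x) w (Pr w))
    (hPg : ∀ w, IsProxPt (fun x => (α : EReal) * g x) w (Pg w))
    (P : EuclideanSpace ℝ (Fin d) → EuclideanSpace ℝ (Fin d))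
    (hP : ∀ z, P z = α⁻¹ • (Pr z - Pg ((2 : ℝ) • Pr z - z - α • f' (Pr z))))
    (L : ℝ) (hL : 0 < L)
    (hLip : ∀ x y, ‖f' x - f' y‖ ≤ L * ‖x - y‖)
    (hαL : α < 3 / (2 * L))
    (hfix : ∃ zs, P zs = 0)
    (z : ℕ → EuclideanSpace ℝ (Fin d))
    (hiter : ∀ k, z (k + 1) = z k - α • P (z k)) :
    ∃ zinf, Tendsto z atTop (𝓝 zinf) ∧ P zinf = 0 ∧
      Tendsto (fun k => Pr (z k)) atTop (𝓝 (Pr zinf)) := by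
  classical
  obtain ⟨hr_lsc, hr_cvx, hr_bot, x0r, hx0r⟩ := hr
  obtain ⟨hg_lsc, hg_cvx, hg_bot, x0g, hx0g⟩ := hg
  set hR : EuclideanSpace ℝ (Fin d) → EReal := fun x => (α : EReal) * r x with hhR
  set hG : EuclideanSpace ℝ (Fin d) → EReal := fun x => (α : EReal) * g x with hhG
  -- basic EReal facts
  have hRbot : ∀ x, hR x ≠ ⊥ := fun x => ereal_coe_mul_ne_bot hα (hr_bot x)
  have hGbot : ∀ x, hG x ≠ ⊥ := fun x => ereal_coe_mul_ne_bot hα (hg_bot x)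
  have hRtop : hR x0r ≠ ⊤ := ereal_coe_mul_ne_top (hr_bot x0r) hx0r
  have hGtop : hG x0g ≠ ⊤ := ereal_coe_mul_ne_top (hg_bot x0g) hx0g
  -- scaled convexity
  have hscaled : ∀ (h0 : EuclideanSpace ℝ (Fin d) → EReal),
      (∀ (a b : ℝ) (x y : EuclideanSpace ℝ (Fin d)), 0 ≤ a → 0 ≤ b → a + b = 1 →
        h0 (a • x + b • y) ≤ (a : EReal) * h0 x + (b : EReal) * h0 y) →
      ∀ (a b : ℝ) (x y : EuclideanSpace ℝ (Fin d)), 0 ≤ a → 0 ≤ b → a + b = 1 →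
      ∀ (cx cy : ℝ), (α : EReal) * h0 x = (cx : EReal) → (α : EReal) * h0 y = (cy : EReal) →
        (α : EReal) * h0 (a • x + b • y) ≤ ((a * cx + b * cy : ℝ) : EReal) := by
    intro h0 hcvx a b x y ha hb hab cx cy hcx hcy
    have hx : h0 x = ((cx / α : ℝ) : EReal) := ereal_mul_eq_coe hα hcx
    have hy : h0 y = ((cy / α : ℝ) : EReal) := ereal_mul_eq_coe hα hcy
    have h1 := hcvx a b x y ha hb hab
    rw [hx, hy] at h1
    have h2 : (a : EReal) * ((cx / α : ℝ) : EReal) + (b : EReal) * ((cy / α : ℝ) : EReal)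
        = ((a * (cx / α) + b * (cy / α) : ℝ) : EReal) := by
      rw [← EReal.coe_mul, ← EReal.coe_mul, ← EReal.coe_add]
    rw [h2] at h1
    have h3 := mul_le_mul_of_nonneg_left h1
      (by exact_mod_cast hα.le : (0 : EReal) ≤ (α : ℝ))
    have h4 : (α : EReal) * ((a * (cx / α) + b * (cy / α) : ℝ) : EReal)
        = ((a * cx + b * cy : ℝ) : EReal) := by
      rw [← EReal.coe_mul]
      congr 1
      field_simp
    rw [h4] at h3
    exact h3
  have hRconv := hscaled r hr_cvx
  have hGconv := hscaled g hg_cvx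
  -- firm nonexpansiveness of the two prox operators
  have firmPr : ∀ u v, ‖Pr u - Pr v‖ ^ 2 ≤ ⟪u - v, Pr u - Pr v⟫ :=
    fun u v => prox_firm hRconv hRbot hRtop hPr u v
  have firmPg : ∀ u v, ‖Pg u - Pg v‖ ^ 2 ≤ ⟪u - v, Pg u - Pg v⟫ :=
    fun u v => prox_firm hGconv hGbot hGtop hPg u v
  have lipPr : ∀ u v, ‖Pr u - Pr v‖ ≤ ‖u - v‖ := fun u v => sq_le_inner_to_norm (firmPr u v)
  have lipPg : ∀ u v, ‖Pg u - Pg v‖ ≤ ‖u - v‖ := fun u v => sq_le_inner_to_norm (firmPg u v)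
  -- cocoercivity of f'
  have coco : ∀ x y, 1 / L * ‖f' x - f' y‖ ^ 2 ≤ ⟪f' x - f' y, x - y⟫ :=
    fun x y => cocoercive hfconv hf' hL hLip x y
  -- α • P y = Pr y - Pg (...)
  have hαP : ∀ y, α • P y = Pr y - Pg ((2 : ℝ) • Pr y - y - α • f' (Pr y)) := by
    intro y
    rw [hP y, smul_smul, mul_inv_cancel₀ (ne_of_gt hα), one_smul]
  -- one-step key inequality
  have key : ∀ w, P w = 0 → ∀ y,
      ‖y - α • P y - w‖ ^ 2 + (1 - α * L / 2) * (α ^ 2 * ‖P y‖ ^ 2) ≤ ‖y - w‖ ^ 2 := by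
    intro w hw y
    set x := Pr y with hx
    set xw := Pr w with hxw
    set a := (2 : ℝ) • x - y - α • f' x with ha
    set aw := (2 : ℝ) • xw - w - α • f' xw with haw
    have hfixw : Pg aw = xw := by
      have h1 := hαP w
      rw [hw, smul_zero] at h1
      have := sub_eq_zero.mp h1.symm
      exact this.symm
    set e := y - w with he
    set s := x - xw with hs
    set t := Pg a - Pg aw with ht
    set q := f' x - f' xw with hq
    have h2 : ‖s‖ ^ 2 ≤ ⟪e, s⟫ := firmPr y w
    have hasub : a - aw = (2 : ℝ) • s - e - α • q := by
      rw [ha, haw, hs, he, hq]; module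
    have h1 : ‖t‖ ^ 2 ≤ ⟪(2 : ℝ) • s - e - α • q, t⟫ := by
      rw [← hasub]; exact firmPg a aw
    have h3 : 1 / L * ‖q‖ ^ 2 ≤ ⟪q, s⟫ := coco x xw
    have main := contraction_ineq hα hL h1 h2 h3
    have hts : t - s = -(α • P y) := by
      rw [ht, hs, hfixw, hαP y]
      abel
    have hets : e + t - s = y - α • P y - w := by
      have : e + t - s = e + (t - s) := by abel
      rw [this, hts, he]
      abel
    have hnorm : ‖t - s‖ ^ 2 = α ^ 2 * ‖P y‖ ^ 2 := by
      rw [hts, norm_neg, norm_smul, Real.norm_eq_abs, abs_of_pos hα, mul_pow]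
    rw [hets, hnorm] at main
    exact main
  -- positivity of the contraction constant
  have hαL2 : α * L < 3 / 2 := by
    have h1 : α * L < 3 / (2 * L) * L := by
      exact mul_lt_mul_of_pos_right hαL hL
    have h2 : 3 / (2 * L) * L = 3 / 2 := by field_simp
    linarith [h2 ▸ h1]
  set c : ℝ := 1 - α * L / 2 with hc
  have hcpos : 0 < c := by rw [hc]; linarith
  obtain ⟨zs, hzs⟩ := hfix
  have keyk : ∀ (w : EuclideanSpace ℝ (Fin d)), P w = 0 → ∀ k,
      ‖z (k + 1) - w‖ ^ 2 + c * (α ^ 2 * ‖P (z k)‖ ^ 2) ≤ ‖z k - w‖ ^ 2 := by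
    intro w hw k
    rw [hiter k]
    exact key w hw (z k)
  have hmono : ∀ (w : EuclideanSpace ℝ (Fin d)), P w = 0 → ∀ k,
      ‖z (k + 1) - w‖ ≤ ‖z k - w‖ := by
    intro w hw k
    have h1 := keyk w hw k
    have h2 : 0 ≤ c * (α ^ 2 * ‖P (z k)‖ ^ 2) := by positivity
    nlinarith [norm_nonneg (z (k + 1) - w), norm_nonneg (z k - w)]
  -- summability of residuals
  have htele : ∀ n, (∑ k ∈ Finset.range n, ‖P (z k)‖ ^ 2) ≤ ‖z 0 - zs‖ ^ 2 / (c * α ^ 2) := by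
    intro n
    have hsum : c * α ^ 2 * (∑ k ∈ Finset.range n, ‖P (z k)‖ ^ 2) ≤
        ‖z 0 - zs‖ ^ 2 - ‖z n - zs‖ ^ 2 := by
      have := Finset.sum_range_sub' (fun k => ‖z k - zs‖ ^ 2) n
      calc c * α ^ 2 * (∑ k ∈ Finset.range n, ‖P (z k)‖ ^ 2)
          = ∑ k ∈ Finset.range n, c * (α ^ 2 * ‖P (z k)‖ ^ 2) := by
            rw [Finset.mul_sum]; congr 1; funext k; ring
        _ ≤ ∑ k ∈ Finset.range n, (‖z k - zs‖ ^ 2 - ‖z (k + 1) - zs‖ ^ 2) := by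
            apply Finset.sum_le_sum
            intro k _
            have := keyk zs hzs k
            linarith
        _ = ‖z 0 - zs‖ ^ 2 - ‖z n - zs‖ ^ 2 := Finset.sum_range_sub' _ n
    rw [le_div_iff₀ (by positivity)]
    nlinarith [sq_nonneg ‖z n - zs‖]
  have hsummable : Summable (fun k => ‖P (z k)‖ ^ 2) :=
    summable_of_sum_range_le (fun k => by positivity) htele
  have hsqtend : Tendsto (fun k => ‖P (z k)‖ ^ 2) atTop (𝓝 0) :=
    hsummable.tendsto_atTop_zero
  have hPtend : Tendsto (fun k => P (z k)) atTop (𝓝 0) := by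
    rw [tendsto_zero_iff_norm_tendsto_zero]
    have h1 : Tendsto (fun k => Real.sqrt (‖P (z k)‖ ^ 2)) atTop (𝓝 (Real.sqrt 0)) :=
      (Real.continuous_sqrt.continuousAt.tendsto).comp hsqtend
    rw [Real.sqrt_zero] at h1
    refine h1.congr ?_
    intro k
    exact Real.sqrt_sq (norm_nonneg _)
  -- boundedness and subsequence limit
  have hbd : ∀ k, z k ∈ Metric.closedBall zs ‖z 0 - zs‖ := by
    intro k
    rw [Metric.mem_closedBall, dist_eq_norm]
    induction k with
    | zero => exact le_refl _
    | succ n ih => exact le_trans (hmono zs hzs n) ih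
  obtain ⟨zinf, _, φ, hφ, hφtend⟩ :=
    tendsto_subseq_of_bounded Metric.isBounded_closedBall hbd
  -- continuity of P and Pr
  have hPrc : Continuous Pr := by
    have : LipschitzWith 1 Pr := by
      apply LipschitzWith.of_dist_le_mul
      intro u v
      rw [dist_eq_norm, dist_eq_norm]
      simpa using lipPr u v
    exact this.continuous
  have hPgc : Continuous Pg := by
    have : LipschitzWith 1 Pg := by
      apply LipschitzWith.of_dist_le_mul
      intro u v
      rw [dist_eq_norm, dist_eq_norm]
      simpa using lipPg u v
    exact this.continuous
  have hf'c : Continuous f' := by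
    have : LipschitzWith L.toNNReal f' := by
      apply LipschitzWith.of_dist_le_mul
      intro u v
      rw [dist_eq_norm, dist_eq_norm, Real.coe_toNNReal L hL.le]
      exact hLip u v
    exact this.continuous
  have hPc : Continuous P := by
    have hPeq : P = fun y => α⁻¹ • (Pr y - Pg ((2 : ℝ) • Pr y - y - α • f' (Pr y))) :=
      funext hP
    rw [hPeq]
    have hin : Continuous fun y : EuclideanSpace ℝ (Fin d) =>
        (2 : ℝ) • Pr y - y - α • f' (Pr y) :=
      ((hPrc.const_smul (2 : ℝ)).sub continuous_id).sub ((hf'c.comp hPrc).const_smul α)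
    exact (hPrc.sub (hPgc.comp hin)).const_smul α⁻¹
  -- P zinf = 0
  have hPzinf : P zinf = 0 := by
    have h1 : Tendsto (fun j => P (z (φ j))) atTop (𝓝 (P zinf)) :=
      (hPc.continuousAt.tendsto).comp hφtend
    have h2 : Tendsto (fun j => P (z (φ j))) atTop (𝓝 0) :=
      hPtend.comp hφ.tendsto_atTop
    exact tendsto_nhds_unique h1 h2
  -- full convergence via Fejér monotonicity w.r.t. zinf
  have hanti : Antitone (fun k => ‖z k - zinf‖) :=
    antitone_nat_of_succ_le (fun k => hmono zinf hPzinf k)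
  have hztend : Tendsto z atTop (𝓝 zinf) := by
    rw [Metric.tendsto_atTop]
    intro ε hε
    have h1 : Tendsto (fun j => dist (z (φ j)) zinf) atTop (𝓝 0) :=
      tendsto_iff_dist_tendsto_zero.mp hφtend
    obtain ⟨J, hJ⟩ := (Metric.tendsto_atTop.mp hφtend) ε hε
    refine ⟨φ J, fun k hk => ?_⟩
    have h2 : ‖z k - zinf‖ ≤ ‖z (φ J) - zinf‖ := hanti hk
    rw [dist_eq_norm]
    calc ‖z k - zinf‖ ≤ ‖z (φ J) - zinf‖ := h2
      _ = dist (z (φ J)) zinf := (dist_eq_norm _ _).symm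
      _ < ε := hJ J (le_refl J)
  refine ⟨zinf, hztend, hPzinf, ?_⟩
  exact (hPrc.continuousAt.tendsto).comp hztend
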